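/- Let d ≥ 1 be an integer, let A be a real symmetric positive definite d×d matrix, let n ≥ 1, and for i = 1,…,n let μ_i be a (positive) measure on [0,∞) such that h_i(x) = ∫₀^∞ e^{−s|x|²} dμ_i(s) is finite for all x ∈ ℝ^d. Define F(x) = ∫_{ℝ^d} e^{−⟨y, A y⟩} ∏_{i=1}^n h_i(x + y) dy. Then F(x) ≤ F(0) for all x ∈ ℝ^d; that is, F is maximal at x = 0. -/

import Mathlib

open MeasureTheory Matrix

noncomputable section

open scoped ENNReal

namespace GaussDefAux


variable {d : ℕ}

lemma continuous_quad (A : Matrix (Fin d) (Fin d) ℝ) :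
    Continuous fun z : Fin d → ℝ => z ⬝ᵥ A.mulVec z := by
  simp only [dotProduct, Matrix.mulVec]
  exact continuous_finset_sum _ fun i _ =>
    (continuous_apply i).mul <| continuous_finset_sum _ fun j _ =>
      continuous_const.mul (continuous_apply j)

lemma continuous_dp : Continuous fun z : Fin d → ℝ => z ⬝ᵥ z := by
  simp only [dotProduct]
  exact continuous_finset_sum _ fun i _ => (continuous_apply i).mul (continuous_apply i)

lemma dot_sym {A : Matrix (Fin d) (Fin d) ℝ} (hA : A.PosDef) (u v : Fin d → ℝ) :
    u ⬝ᵥ A.mulVec v = v ⬝ᵥ A.mulVec u := by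
  have hAT : Aᵀ = A := hA.1
  rw [Matrix.dotProduct_mulVec, ← Matrix.mulVec_transpose, hAT, dotProduct_comm]

lemma quad_nonneg {A : Matrix (Fin d) (Fin d) ℝ} (hA : A.PosDef) (v : Fin d → ℝ) :
    0 ≤ v ⬝ᵥ A.mulVec v := by
  simpa using hA.posSemidef.dotProduct_mulVec_nonneg v

lemma dp_self_nonneg (v : Fin d → ℝ) : 0 ≤ v ⬝ᵥ v :=
  Finset.sum_nonneg fun _ _ => mul_self_nonneg _

lemma complete_square {A : Matrix (Fin d) (Fin d) ℝ} (hA : A.PosDef) {S : ℝ} (hS : 0 ≤ S)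
    (x : Fin d → ℝ) :
    ∃ c : ℝ, 0 ≤ c ∧ c ≤ x ⬝ᵥ A.mulVec x ∧ ∃ m : Fin d → ℝ, ∀ y : Fin d → ℝ,
      y ⬝ᵥ A.mulVec y + S * ((x + y) ⬝ᵥ (x + y)) =
        (y + m) ⬝ᵥ A.mulVec (y + m) + S * ((y + m) ⬝ᵥ (y + m)) + c := by
  rcases eq_or_lt_of_le hS with rfl | hS0
  · exact ⟨0, le_refl _, quad_nonneg hA x, 0, fun y => by simp⟩
  set B : Matrix (Fin d) (Fin d) ℝ := A + S • 1 with hBdef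
  have hBpd : B.PosDef := by
    apply hA.add_posSemidef
    rw [Matrix.smul_one_eq_diagonal]
    exact Matrix.posSemidef_diagonal_iff.2 fun _ => hS
  set m : Fin d → ℝ := B⁻¹ *ᵥ (S • x) with hmdef
  have hm : A *ᵥ m + S • m = S • x := by
    have : B *ᵥ m = S • x := by
      rw [hmdef, Matrix.mulVec_mulVec, Matrix.mul_nonsing_inv _ hBpd.det_pos.ne'.isUnit,
        Matrix.one_mulVec]
    simpa [hBdef, Matrix.add_mulVec, Matrix.smul_mulVec, Matrix.one_mulVec] using this
  set w : Fin d → ℝ := A *ᵥ m with hwdef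
  have hx : x = m + S⁻¹ • w := by
    have := congrArg (fun v => S⁻¹ • v) hm
    simp only [smul_add, smul_smul, inv_mul_cancel₀ hS0.ne', one_smul] at this
    rw [← this]; abel
  have hcw : S * (x ⬝ᵥ x) - (m ⬝ᵥ A.mulVec m + S * (m ⬝ᵥ m)) = w ⬝ᵥ x := by
    have h1 : (S • x) ⬝ᵥ x = w ⬝ᵥ x + S * (m ⬝ᵥ x) := by
      rw [← hm]; simp [add_dotProduct, smul_dotProduct, smul_eq_mul]
    have h2 : m ⬝ᵥ (S • x) = m ⬝ᵥ A.mulVec m + S * (m ⬝ᵥ m) := by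
      rw [← hm]; simp [dotProduct_add, dotProduct_smul, smul_eq_mul, hwdef]
    have h3 : m ⬝ᵥ (S • x) = S * (m ⬝ᵥ x) := by simp [dotProduct_smul, smul_eq_mul]
    have h4 : (S • x) ⬝ᵥ x = S * (x ⬝ᵥ x) := by simp [smul_dotProduct, smul_eq_mul]
    linarith
  refine ⟨S * (x ⬝ᵥ x) - (m ⬝ᵥ A.mulVec m + S * (m ⬝ᵥ m)), ?_, ?_, m, ?_⟩
  · rw [hcw, hx]
    have : w ⬝ᵥ (m + S⁻¹ • w) = w ⬝ᵥ m + S⁻¹ * (w ⬝ᵥ w) := by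
      simp [dotProduct_add, dotProduct_smul, smul_eq_mul]
    rw [this]
    have h5 : w ⬝ᵥ m = m ⬝ᵥ A.mulVec m := by rw [dotProduct_comm]
    have := quad_nonneg hA m
    have := dp_self_nonneg w
    have := inv_nonneg.2 hS0.le
    nlinarith
  · rw [hcw]
    have hwx : w ⬝ᵥ x = m ⬝ᵥ A.mulVec x := by
      rw [dotProduct_comm, hwdef]; exact dot_sym hA x m
    have hAx : A.mulVec x = w + S⁻¹ • A.mulVec w := by
      rw [hx, Matrix.mulVec_add, Matrix.mulVec_smul, hwdef]
    have h6 : x ⬝ᵥ A.mulVec x = m ⬝ᵥ A.mulVec x + S⁻¹ * (w ⬝ᵥ A.mulVec x) := by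
      nth_rewrite 1 [hx]
      simp [add_dotProduct, smul_dotProduct, smul_eq_mul]
    have h7 : w ⬝ᵥ A.mulVec x = w ⬝ᵥ w + S⁻¹ * (w ⬝ᵥ A.mulVec w) := by
      rw [hAx]; simp [dotProduct_add, dotProduct_smul, smul_eq_mul]
    have hq := quad_nonneg hA w
    have hdp := dp_self_nonneg w
    have hSi : (0:ℝ) ≤ S⁻¹ := inv_nonneg.2 hS0.le
    have k1 : 0 ≤ S⁻¹ * (w ⬝ᵥ A.mulVec x) := by
      rw [h7]
      exact mul_nonneg hSi (add_nonneg hdp (mul_nonneg hSi hq))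
    rw [hwx]
    linarith [h6, k1]
  · intro y
    have e1 : m ⬝ᵥ A.mulVec y = y ⬝ᵥ A.mulVec m := dot_sym hA m y
    have e2 : x ⬝ᵥ y = y ⬝ᵥ x := dotProduct_comm x y
    have e3 : y ⬝ᵥ m = m ⬝ᵥ y := dotProduct_comm y m
    have hkey : y ⬝ᵥ A.mulVec m + S * (y ⬝ᵥ m) = S * (y ⬝ᵥ x) := by
      have := congrArg (fun v => y ⬝ᵥ v) hm
      simpa [dotProduct_add, dotProduct_smul, smul_eq_mul] using this
    have e2' : S * (x ⬝ᵥ y) = S * (y ⬝ᵥ x) := by rw [e2]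
    have e3' : S * (y ⬝ᵥ m) = S * (m ⬝ᵥ y) := by rw [e3]
    simp only [Matrix.mulVec_add, dotProduct_add, add_dotProduct]
    ring_nf
    linarith [e1, e2', e3', hkey]

lemma inner_shift {A : Matrix (Fin d) (Fin d) ℝ} (hA : A.PosDef) {S : ℝ} (hS : 0 ≤ S)
    (x : Fin d → ℝ) :
    ∃ c : ℝ, 0 ≤ c ∧ c ≤ x ⬝ᵥ A.mulVec x ∧
      (∫⁻ y : Fin d → ℝ,
          ENNReal.ofReal (Real.exp (-(y ⬝ᵥ A.mulVec y + S * ((x + y) ⬝ᵥ (x + y)))))) =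
      ENNReal.ofReal (Real.exp (-c)) *
        ∫⁻ y : Fin d → ℝ,
          ENNReal.ofReal (Real.exp (-(y ⬝ᵥ A.mulVec y + S * (y ⬝ᵥ y)))) := by
  obtain ⟨c, hc0, hcx, m, hid⟩ := complete_square hA hS x
  refine ⟨c, hc0, hcx, ?_⟩
  set g : (Fin d → ℝ) → ℝ≥0∞ :=
    fun z => ENNReal.ofReal (Real.exp (-(z ⬝ᵥ A.mulVec z + S * (z ⬝ᵥ z)))) with hg
  calc ∫⁻ y : Fin d → ℝ,
        ENNReal.ofReal (Real.exp (-(y ⬝ᵥ A.mulVec y + S * ((x + y) ⬝ᵥ (x + y)))))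
      = ∫⁻ y : Fin d → ℝ, ENNReal.ofReal (Real.exp (-c)) * g (y + m) := by
        apply lintegral_congr
        intro y
        rw [hid y, hg]
        rw [← ENNReal.ofReal_mul (Real.exp_nonneg _), ← Real.exp_add]
        ring_nf
    _ = ENNReal.ofReal (Real.exp (-c)) * ∫⁻ y : Fin d → ℝ, g (y + m) :=
        lintegral_const_mul' _ _ ENNReal.ofReal_ne_top
    _ = ENNReal.ofReal (Real.exp (-c)) * ∫⁻ y : Fin d → ℝ, g y := by
        rw [lintegral_add_right_eq_self g m]

lemma lintegral_pi_prod {n : ℕ} (ν : Fin n → Measure ℝ) [∀ i, SigmaFinite (ν i)]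
    (f : Fin n → ℝ → ℝ≥0∞) (hf : ∀ i, Measurable (f i)) :
    ∫⁻ s : Fin n → ℝ, ∏ i, f i (s i) ∂Measure.pi ν = ∏ i, ∫⁻ t, f i t ∂ν i := by
  induction n with
  | zero => simp [lintegral_one, Measure.pi_univ]
  | succ n ih =>
      have hmp := (measurePreserving_piFinSuccAbove ν 0).symm
      rw [← hmp.lintegral_comp_emb (MeasurableEquiv.measurableEmbedding _)]
      simp_rw [MeasurableEquiv.piFinSuccAbove_symm_apply, Fin.insertNthEquiv,
        Fin.prod_univ_succ, Fin.insertNth_zero]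
      simp only [Fin.zero_succAbove, Function.comp_def, Fin.cons_zero, Fin.cons_succ,
        Equiv.coe_fn_mk, cast_eq]
      have hG : Measurable fun b : Fin n → ℝ => ∏ x : Fin n, f x.succ (b x) :=
        Finset.measurable_prod _ fun i _ => (hf i.succ).comp (measurable_pi_apply i)
      rw [show (∫⁻ a : ℝ × (Fin n → ℝ), f 0 a.1 * ∏ x : Fin n, f x.succ (a.2 x)
            ∂(ν 0).prod (Measure.pi fun j => ν j.succ)) =
          (∫⁻ t, f 0 t ∂ν 0) * ∫⁻ b, ∏ x : Fin n, f x.succ (b x) ∂Measure.pi (fun j => ν j.succ)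
          from lintegral_prod_mul (hf 0).aemeasurable hG.aemeasurable,
        ih (fun j => ν j.succ) (fun i => f i.succ) (fun i => hf i.succ)]

/-- The lintegral form of `F`. -/
def Lfun (A : Matrix (Fin d) (Fin d) ℝ) {n : ℕ} (ν : Fin n → Measure ℝ)
    (x' : Fin d → ℝ) : ℝ≥0∞ :=
  ∫⁻ y : Fin d → ℝ, ENNReal.ofReal (Real.exp (-(y ⬝ᵥ A.mulVec y))) *
    ∏ i, ∫⁻ s, ENNReal.ofReal (Real.exp (-s * ((x' + y) ⬝ᵥ (x' + y)))) ∂ν i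

lemma Lfun_eq (A : Matrix (Fin d) (Fin d) ℝ) {n : ℕ} (ν : Fin n → Measure ℝ)
    [∀ i, IsFiniteMeasure (ν i)] (x' : Fin d → ℝ) :
    Lfun A ν x' = ∫⁻ s : Fin n → ℝ, (∫⁻ y : Fin d → ℝ,
      ENNReal.ofReal (Real.exp (-(y ⬝ᵥ A.mulVec y +
        (∑ i, s i) * ((x' + y) ⬝ᵥ (x' + y)))))) ∂Measure.pi ν := by
  have hmeas : ∀ r : ℝ, Measurable fun t : ℝ => ENNReal.ofReal (Real.exp (-t * r)) := fun r =>
    (ENNReal.continuous_ofReal.comp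
      (Real.continuous_exp.comp ((continuous_neg.mul continuous_const)))).measurable
  have step1 : Lfun A ν x' = ∫⁻ y : Fin d → ℝ, ∫⁻ s : Fin n → ℝ,
      ENNReal.ofReal (Real.exp (-(y ⬝ᵥ A.mulVec y +
        (∑ i, s i) * ((x' + y) ⬝ᵥ (x' + y))))) ∂Measure.pi ν := by
    unfold Lfun
    apply lintegral_congr
    intro y
    rw [← lintegral_pi_prod ν
      (fun _ t => ENNReal.ofReal (Real.exp (-t * ((x' + y) ⬝ᵥ (x' + y)))))
      (fun _ => hmeas _)]
    rw [← lintegral_const_mul' _ _ ENNReal.ofReal_ne_top]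
    apply lintegral_congr
    intro s
    rw [← ENNReal.ofReal_prod_of_nonneg (fun _ _ => (Real.exp_nonneg _)),
      ← Real.exp_sum, ← ENNReal.ofReal_mul (Real.exp_nonneg _), ← Real.exp_add]
    congr 2
    rw [show ∑ x : Fin n, -s x * ((x' + y) ⬝ᵥ (x' + y)) =
        (∑ x : Fin n, -s x) * ((x' + y) ⬝ᵥ (x' + y)) from (Finset.sum_mul _ _ _).symm,
      Finset.sum_neg_distrib]
    ring
  rw [step1]
  apply lintegral_lintegral_swap
  apply Continuous.aemeasurable
  apply ENNReal.continuous_ofReal.comp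
  apply Real.continuous_exp.comp
  apply Continuous.neg
  exact ((continuous_quad A).comp continuous_fst).add
    (((continuous_finset_sum _ fun i _ => (continuous_apply i).comp continuous_snd)).mul
      (continuous_dp.comp (continuous_const.add continuous_fst)))

lemma Lfun_le {A : Matrix (Fin d) (Fin d) ℝ} (hA : A.PosDef) {n : ℕ}
    (ν : Fin n → Measure ℝ) [∀ i, IsFiniteMeasure (ν i)]
    (hν : ∀ i, ν i (Set.Iio 0) = 0) (x : Fin d → ℝ) :
    Lfun A ν x ≤ Lfun A ν 0 ∧
      ENNReal.ofReal (Real.exp (-(x ⬝ᵥ A.mulVec x))) * Lfun A ν 0 ≤ Lfun A ν x := by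
  have hae : ∀ᵐ s : Fin n → ℝ ∂Measure.pi ν, 0 ≤ ∑ i, s i := by
    have h1 : ∀ᵐ s : Fin n → ℝ ∂Measure.pi ν, ∀ i, 0 ≤ s i := by
      rw [ae_all_iff]
      intro i
      rw [ae_iff]
      have hset : {s : Fin n → ℝ | ¬ 0 ≤ s i} = Function.eval i ⁻¹' (Set.Iio 0) := by
        ext s; simp [not_le]
      rw [hset]
      exact Measure.pi_eval_preimage_null _ (hν i)
    exact h1.mono fun s hs => Finset.sum_nonneg fun i _ => hs i
  have h00 : ∀ S : ℝ, (∫⁻ y : Fin d → ℝ,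
      ENNReal.ofReal (Real.exp (-(y ⬝ᵥ A.mulVec y + S * (((0 : Fin d → ℝ) + y) ⬝ᵥ ((0 : Fin d → ℝ) + y)))))) =
      ∫⁻ y : Fin d → ℝ,
      ENNReal.ofReal (Real.exp (-(y ⬝ᵥ A.mulVec y + S * (y ⬝ᵥ y)))) := by
    intro S; simp only [zero_add]
  constructor
  · rw [Lfun_eq, Lfun_eq]
    refine lintegral_mono_ae (hae.mono fun s hS => ?_)
    obtain ⟨c, hc0, hcx, hid⟩ := inner_shift hA hS x
    rw [h00, hid]
    calc ENNReal.ofReal (Real.exp (-c)) * _ ≤ 1 * _ := by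
          refine mul_le_mul_left ?_ _
          exact ENNReal.ofReal_le_one.2 (Real.exp_le_one_iff.2 (by linarith))
      _ = _ := one_mul _
  · rw [Lfun_eq, Lfun_eq, ← lintegral_const_mul' _ _ ENNReal.ofReal_ne_top]
    refine lintegral_mono_ae (hae.mono fun s hS => ?_)
    obtain ⟨c, hc0, hcx, hid⟩ := inner_shift hA hS x
    rw [h00, hid]
    exact mul_le_mul_left (ENNReal.ofReal_le_ofReal
      (Real.exp_le_exp.2 (by linarith))) _

end GaussDefAux

open GaussDefAux

/-- Lemma A.3 of Bley–Thomas: if `h₁, …, hₙ` are Gaussian definite functions, then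
`F(x) = ∫ exp(-⟨y, Ay⟩) ∏ᵢ hᵢ(x + y) dy` is maximal at `x = 0`. -/
theorem gaussian_definite_product_maximal_at_origin
    {d : ℕ} (hd : 1 ≤ d)
    (A : Matrix (Fin d) (Fin d) ℝ) (hA : A.PosDef)
    {n : ℕ} (hn : 1 ≤ n) (μ : Fin n → Measure ℝ)
    (h : Fin n → (Fin d → ℝ) → ℝ)
    (hh : ∀ (i : Fin n) (x : Fin d → ℝ), h i x = ∫ s in Set.Ici (0 : ℝ), Real.exp (-s * ∑ j, x j ^ 2) ∂(μ i))
    (hfin : ∀ (i : Fin n) (x : Fin d → ℝ),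
      IntegrableOn (fun s => Real.exp (-s * ∑ j, x j ^ 2)) (Set.Ici 0) (μ i))
    (x : Fin d → ℝ) :
    ∫ y : Fin d → ℝ, Real.exp (-(y ⬝ᵥ A.mulVec y)) * ∏ i, h i (x + y) ≤
      ∫ y : Fin d → ℝ, Real.exp (-(y ⬝ᵥ A.mulVec y)) * ∏ i, h i y := by
  classical
  have hNdp : ∀ z : Fin d → ℝ, ∑ j, z j ^ 2 = z ⬝ᵥ z := fun z => by
    simp [dotProduct, pow_two]
  have hpos : ∀ i z, 0 ≤ h i z := fun i z => by
    rw [hh]; exact integral_nonneg fun s => (Real.exp_pos _).le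
  have j0 : Fin d := ⟨0, hd⟩
  have hInt : ∀ (i : Fin n) (t : ℝ), 0 ≤ t →
      IntegrableOn (fun s => Real.exp (-s * t)) (Set.Ici 0) (μ i) := by
    intro i t ht
    have hsum : ∑ j, (fun j : Fin d => if j = j0 then Real.sqrt t else 0) j ^ 2 = t := by
      simp only
      calc ∑ j, (if j = j0 then Real.sqrt t else 0) ^ 2
          = ∑ j, (if j = j0 then t else 0) := by
            refine Finset.sum_congr rfl fun j _ => ?_
            split <;> simp [Real.sq_sqrt ht]
        _ = t := by simp
    have := hfin i (fun j => if j = j0 then Real.sqrt t else 0)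
    rwa [hsum] at this
  have hsmeas : ∀ i, Measurable (h i) := by
    intro i
    have hcs : Continuous fun z : Fin d → ℝ => ∑ j, z j ^ 2 :=
      continuous_finset_sum _ fun j _ => (continuous_apply j).pow 2
    set G : ℝ → ℝ := fun r => ∫ s in Set.Ici 0, Real.exp (-s * max r 0) ∂μ i with hG
    have hanti : Antitone G := by
      intro r1 r2 hle
      apply integral_mono_ae (hInt i _ (le_max_right _ _)) (hInt i _ (le_max_right _ _))
      refine (ae_restrict_mem measurableSet_Ici).mono fun s hs => ?_
      have hM : max r1 0 ≤ max r2 0 := max_le_max hle le_rfl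
      have hs0 : (0:ℝ) ≤ s := hs
      exact Real.exp_le_exp.2 (by nlinarith)
    have heq : h i = fun z => G (∑ j, z j ^ 2) := by
      funext z
      rw [hh i z, hG]
      simp only
      rw [max_eq_left (Finset.sum_nonneg fun j _ => sq_nonneg _)]
    rw [heq]
    exact hanti.measurable.comp hcs.measurable
  set ν : Fin n → Measure ℝ := fun i => (μ i).restrict (Set.Ici 0) with hνdef
  haveI hfm : ∀ i, IsFiniteMeasure (ν i) := by
    intro i
    constructor
    have h1 := hInt i 0 le_rfl
    simp only [mul_zero, Real.exp_zero] at h1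
    rw [hνdef]
    simp only
    rw [Measure.restrict_apply_univ]
    rcases (integrableOn_const_iff (C := (1:ℝ)) (by simp)).1 h1 with h' | h'
    · norm_num at h'
    · exact h'
  have hν0 : ∀ i, ν i (Set.Iio 0) = 0 := by
    intro i
    rw [hνdef]
    simp only
    rw [Measure.restrict_apply measurableSet_Iio]
    have : Set.Iio (0:ℝ) ∩ Set.Ici 0 = ∅ := by
      ext r
      simp only [Set.mem_inter_iff, Set.mem_Iio, Set.mem_Ici, Set.mem_empty_iff_false, iff_false,
        not_and, not_le]
      intro h'; exact h'
    rw [this, measure_empty]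
  have hof : ∀ (i : Fin n) (z : Fin d → ℝ), ENNReal.ofReal (h i z) =
      ∫⁻ s, ENNReal.ofReal (Real.exp (-s * (z ⬝ᵥ z))) ∂ν i := by
    intro i z
    rw [hh i z, hNdp z]
    exact ofReal_integral_eq_lintegral_ofReal
      (by have := hfin i z; rwa [hNdp z] at this)
      (Filter.Eventually.of_forall fun s => (Real.exp_pos _).le)
  have hB : ∀ x' : Fin d → ℝ,
      (∫ y : Fin d → ℝ, Real.exp (-(y ⬝ᵥ A.mulVec y)) * ∏ i, h i (x' + y)) =
        (Lfun A ν x').toReal := by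
    intro x'
    have hms : AEStronglyMeasurable
        (fun y : Fin d → ℝ => Real.exp (-(y ⬝ᵥ A.mulVec y)) * ∏ i, h i (x' + y)) volume := by
      refine Measurable.aestronglyMeasurable (Measurable.mul ?_ ?_)
      · exact (Real.continuous_exp.comp (continuous_quad A).neg).measurable
      · exact Finset.measurable_prod _ fun i _ =>
          (hsmeas i).comp (measurable_id.const_add x')
    rw [integral_eq_lintegral_of_nonneg_ae
      (Filter.Eventually.of_forall fun y => mul_nonneg (Real.exp_nonneg _)
        (Finset.prod_nonneg fun i _ => hpos i _)) hms]
    congr 1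
    apply lintegral_congr
    intro y
    rw [ENNReal.ofReal_mul (Real.exp_nonneg _),
      ENNReal.ofReal_prod_of_nonneg (fun i _ => hpos i _)]
    congr 1
    exact Finset.prod_congr rfl fun i _ => hof i _
  have hB0 : (∫ y : Fin d → ℝ, Real.exp (-(y ⬝ᵥ A.mulVec y)) * ∏ i, h i y) =
      (Lfun A ν 0).toReal := by
    rw [← hB 0]
    simp only [zero_add]
  rw [hB x, hB0]
  obtain ⟨hle, hge⟩ := Lfun_le hA ν hν0 x
  rcases eq_or_ne (Lfun A ν 0) ⊤ with htop | htop
  · have hx_top : Lfun A ν x = ⊤ := by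
      have h2 := hge
      rw [htop, ENNReal.mul_top (by
        simp only [ne_eq, ENNReal.ofReal_eq_zero, not_le]
        exact Real.exp_pos _)] at h2
      exact top_le_iff.1 h2
    rw [hx_top, htop]
  · exact ENNReal.toReal_mono htop hle

end
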